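/- Let X be a nonempty finite type, D_0, D_1 distributions on X, ε ∈ (0,1), and 𝓕 a family of functions X → [0,1]. Set D_X := (1−ε)·D_0 + ε·D_1 and let g be the associated tilted posterior function. If h : X → [0,1] is (𝓕, ε²)-regular for g under D_X, then for every f ∈ 𝓕: |E_{D_1}[f] − (1/ε)·E_{D_X}[f·h]| ≤ ε. -/

import Mathlib

/-- Expectation of `f` under the (finitely supported) distribution `D`. -/
noncomputable def expect {X : Type*} [Fintype X] (D f : X → ℝ) : ℝ := ∑ x, D x * f x

/-- `D` is a probability distribution on the finite type `X`. -/
def IsDist {X : Type*} [Fintype X] (D : X → ℝ) : Prop := (∀ x, 0 ≤ D x) ∧ ∑ x, D x = 1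

theorem stmt_13 {X : Type*} [Fintype X] [Nonempty X]
    (D0 D1 : X → ℝ) (hD0 : IsDist D0) (hD1 : IsDist D1)
    (ε : ℝ) (hε : ε ∈ Set.Ioo (0:ℝ) 1)
    (𝓕 : Set (X → ℝ)) (h𝓕 : ∀ f ∈ 𝓕, ∀ x, f x ∈ Set.Icc (0:ℝ) 1)
    (DX : X → ℝ) (hDX : DX = fun x => (1 - ε) * D0 x + ε * D1 x)
    (g : X → ℝ)
    (hg : g = fun x => if 0 < DX x then ε * D1 x / DX x else 0)
    (h : X → ℝ) (hh : ∀ x, h x ∈ Set.Icc (0:ℝ) 1)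
    (hreg : ∀ f ∈ 𝓕, |expect DX (fun x => f x * (g x - h x))| ≤ ε ^ 2) :
    ∀ f ∈ 𝓕, |expect D1 f - (1/ε) * expect DX (fun x => f x * h x)| ≤ ε := by
  intro f hf
  obtain ⟨hε0, hε1⟩ := hε
  have key : ∀ x, DX x * (f x * g x) = ε * (D1 x * f x) := by
    intro x
    subst hg
    by_cases hx : 0 < DX x
    · simp only [hx, if_pos]
      field_simp
    · have hDXnn : 0 ≤ DX x := by
        subst hDX
        dsimp only
        have := hD0.1 x; have := hD1.1 x
        nlinarith
      have hDX0 : DX x = 0 := le_antisymm (not_lt.mp hx) hDXnn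
      have hD10 : D1 x = 0 := by
        subst hDX
        dsimp only at hDX0
        have := hD0.1 x; have := hD1.1 x
        nlinarith
      simp [hDX0, hD10]
  have hEg : expect DX (fun x => f x * g x) = ε * expect D1 f := by
    unfold expect
    rw [Finset.mul_sum]
    exact Finset.sum_congr rfl fun x _ => key x
  have hsplit : expect DX (fun x => f x * (g x - h x))
      = ε * expect D1 f - expect DX (fun x => f x * h x) := by
    rw [← hEg]
    unfold expect
    rw [← Finset.sum_sub_distrib]
    exact Finset.sum_congr rfl fun x _ => by ring
  have hreg' := hreg f hf
  rw [hsplit] at hreg'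
  have : expect D1 f - (1/ε) * expect DX (fun x => f x * h x)
      = (1/ε) * (ε * expect D1 f - expect DX (fun x => f x * h x)) := by
    field_simp
  rw [this, abs_mul, abs_of_pos (by positivity : (0:ℝ) < 1/ε)]
  calc 1/ε * |ε * expect D1 f - expect DX (fun x => f x * h x)|
      ≤ 1/ε * ε ^ 2 := by
        apply mul_le_mul_of_nonneg_left hreg' (by positivity)
    _ = ε := by
        field_simp
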